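/- Let (F,d) be a Fréchet space with a complete translation-invariant metric d with absolutely convex balls, U ⊆ F open, and ξ : U → F a map which is bounded by R in operator behavior and Lipschitz in the sense that ‖ξ(x)−ξ(y)‖_d ≤ R‖x−y‖_d on a closed ball B̄_r(p_0) ⊆ U, with ‖ξ(p)‖_d ≤ L on B̄_r(p_0). Let m = min{1/R, r/L} and t_0 ∈ ℝ. Then the Picard iteration ℓ_0(t) = p_0, ℓ_{n+1}(t) = p_0 + ∫_{t_0}^t ξ(ℓ_n(u)) du satisfies ℓ_n(t) ∈ B̄_r(p_0) for all n and all t ∈ [t_0−m, t_0+m]. -/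
import Mathlib


open Metric Set

/-- Picard iterates stay in the closed ball.  `(F,d)` is a Fréchet space with a
complete translation-invariant metric with absolutely convex balls, `ξ` is `R`-Lipschitz and
bounded by `L` on the closed ball `B̄_r(p₀) ⊆ U`, `m = min (1/R) (r/L)`, and `Int c a b`
denotes the Riemann integral `∫_a^b c(u) du`, satisfying the standard estimate
`‖∫_a^b c‖_d ≤ |b-a| · sup ‖c‖_d`.  Then the iterates
`ℓ₀(t) = p₀`, `ℓ_{n+1}(t) = p₀ + ∫_{t₀}^t ξ(ℓ_n(u)) du` lie in `B̄_r(p₀)` for all `n` and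
all `t ∈ [t₀ - m, t₀ + m]`. -/
theorem stmt9 {F : Type*} [AddCommGroup F] [Module ℝ F] [MetricSpace F] [CompleteSpace F]
    (htrans : ∀ x y z : F, dist (x + z) (y + z) = dist x y)
    (hball : ∀ ρ : ℝ, 0 < ρ → Convex ℝ (Metric.ball (0 : F) ρ) ∧ Balanced ℝ (Metric.ball (0 : F) ρ))
    (U : Set F) (hU : IsOpen U) (ξ : F → F) (p₀ : F) (R L r : ℝ)
    (hR : 0 < R) (hL : 0 < L) (hr : 0 < r)
    (hUB : Metric.closedBall p₀ r ⊆ U)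
    (hLip : ∀ x ∈ Metric.closedBall p₀ r, ∀ y ∈ Metric.closedBall p₀ r,
      dist (ξ x) (ξ y) ≤ R * dist x y)
    (hbd : ∀ p ∈ Metric.closedBall p₀ r, dist (ξ p) 0 ≤ L)
    (m : ℝ) (hm : m = min (1 / R) (r / L)) (t₀ : ℝ)
    (Int : (ℝ → F) → ℝ → ℝ → F)
    (hIntEst : ∀ (c : ℝ → F) (a b C : ℝ),
      (∀ u ∈ Set.uIcc a b, dist (c u) 0 ≤ C) → dist (Int c a b) 0 ≤ |b - a| * C)
    (ℓ : ℕ → ℝ → F) (hℓ0 : ∀ t, ℓ 0 t = p₀)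
    (hℓrec : ∀ n t, ℓ (n + 1) t = p₀ + Int (fun u => ξ (ℓ n u)) t₀ t) :
    ∀ n : ℕ, ∀ t ∈ Set.Icc (t₀ - m) (t₀ + m), ℓ n t ∈ Metric.closedBall p₀ r := by
  intro n
  induction n with
  | zero => intro t ht; simp [hℓ0]; exact hr.le
  | succ n ih =>
    intro t ht
    have hdist : dist (ℓ (n+1) t) p₀ = dist (Int (fun u => ξ (ℓ n u)) t₀ t) 0 := by
      rw [hℓrec]
      have := htrans (Int (fun u => ξ (ℓ n u)) t₀ t) 0 p₀
      simpa [add_comm] using this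
    have hsub : Set.uIcc t₀ t ⊆ Set.Icc (t₀ - m) (t₀ + m) := by
      have hm0 : 0 ≤ m := by
        rw [hm]; exact le_min (by positivity) (by positivity)
      apply Set.uIcc_subset_Icc ⟨by linarith, by linarith⟩ ⟨ht.1, ht.2⟩
    have hest : dist (Int (fun u => ξ (ℓ n u)) t₀ t) 0 ≤ |t - t₀| * L := by
      apply hIntEst
      intro u hu
      exact hbd _ (ih u (hsub hu))
    have htm : |t - t₀| ≤ m := by
      rw [abs_le]; constructor <;> [linarith [ht.1]; linarith [ht.2]]
    have hmL : m * L ≤ r := by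
      have : m ≤ r / L := hm ▸ min_le_right _ _
      calc m * L ≤ (r / L) * L := by nlinarith
        _ = r := by field_simp
    simp only [Metric.mem_closedBall]
    calc dist (ℓ (n+1) t) p₀ = _ := hdist
      _ ≤ |t - t₀| * L := hest
      _ ≤ m * L := by nlinarith
      _ ≤ r := hmL
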